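/- Let F be the field of fractions of the polynomial ring ℂ[x,y] in two variables over the complex numbers (the rational function field ℂ(x,y)), and let x, y denote the images of the two variables in F. Then the quaternion algebra ℍ[F, x, y] is a division ring (every nonzero element is invertible). In particular its class in the Brauer group of ℂ(x,y) is nonzero. -/

import Mathlib

open Quaternion Polynomial

private lemma sq_eq_X_mul_sq (p q : Polynomial ℂ) (h : p ^ 2 = Polynomial.X * q ^ 2) :
    p = 0 ∧ q = 0 := by
  rcases eq_or_ne q 0 with hq | hq
  · subst hq
    simp only [ne_eq, OfNat.ofNat_ne_zero, not_false_eq_true, zero_pow, mul_zero,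
      pow_eq_zero_iff] at h
    exact ⟨h, rfl⟩
  rcases eq_or_ne p 0 with hp | hp
  · exfalso
    rw [hp] at h
    exact (mul_ne_zero X_ne_zero (pow_ne_zero 2 hq)) (by simpa using h.symm)
  exfalso
  have h1 : (p ^ 2).natDegree = (X * q ^ 2).natDegree := by rw [h]
  rw [natDegree_pow, natDegree_mul X_ne_zero (pow_ne_zero 2 hq), natDegree_X, natDegree_pow] at h1
  omega

private lemma descentA : ∀ n : ℕ, ∀ P Q R S : Polynomial (Polynomial ℂ),
    P.natDegree + Q.natDegree + R.natDegree + S.natDegree = n →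
    P ^ 2 = X * Q ^ 2 + C X * R ^ 2 - X * C X * S ^ 2 →
    P = 0 ∧ Q = 0 ∧ R = 0 ∧ S = 0 := by
  intro n
  induction n using Nat.strong_induction_on with
  | _ n ih =>
  intro P Q R S hdeg heq
  by_cases h0 : P = 0 ∧ Q = 0 ∧ R = 0 ∧ S = 0
  · exact h0
  exfalso
  have hev := congrArg (Polynomial.eval (0 : Polynomial ℂ)) heq
  simp only [eval_pow, eval_add, eval_sub, eval_mul, eval_X, eval_C, zero_mul, mul_zero,
    zero_add, add_zero, sub_zero, zero_sub] at hev
  have hPR := sq_eq_X_mul_sq (Polynomial.eval 0 P) (Polynomial.eval 0 R) hev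
  obtain ⟨P₁, rfl⟩ : X ∣ P := X_dvd_iff.mpr (by rw [coeff_zero_eq_eval_zero, hPR.1])
  obtain ⟨R₁, rfl⟩ : X ∣ R := X_dvd_iff.mpr (by rw [coeff_zero_eq_eval_zero, hPR.2])
  have h2 : X * (Q ^ 2 - C X * S ^ 2) = X * (X * P₁ ^ 2 - C X * X * R₁ ^ 2) := by
    linear_combination -heq
  have h3 := mul_left_cancel₀ (X_ne_zero (R := Polynomial ℂ)) h2
  have hev2 := congrArg (Polynomial.eval (0 : Polynomial ℂ)) h3
  simp only [eval_pow, eval_add, eval_sub, eval_mul, eval_X, eval_C, zero_mul, mul_zero,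
    zero_add, add_zero, sub_zero, zero_sub] at hev2
  have hQS := sq_eq_X_mul_sq (Polynomial.eval 0 Q) (Polynomial.eval 0 S)
    (by linear_combination hev2)
  obtain ⟨Q₁, rfl⟩ : X ∣ Q := X_dvd_iff.mpr (by rw [coeff_zero_eq_eval_zero, hQS.1])
  obtain ⟨S₁, rfl⟩ : X ∣ S := X_dvd_iff.mpr (by rw [coeff_zero_eq_eval_zero, hQS.2])
  have h4 : X ^ 2 * (P₁ ^ 2) = X ^ 2 * (X * Q₁ ^ 2 + C X * R₁ ^ 2 - X * C X * S₁ ^ 2) := by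
    linear_combination heq
  have h5 := mul_left_cancel₀ (pow_ne_zero 2 (X_ne_zero (R := Polynomial ℂ))) h4
  have key : ∀ w : Polynomial (Polynomial ℂ),
      w.natDegree ≤ (X * w).natDegree ∧ (w ≠ 0 → w.natDegree < (X * w).natDegree) := by
    intro w
    rcases eq_or_ne w 0 with rfl | hw
    · simp
    · rw [natDegree_mul X_ne_zero hw, natDegree_X]
      omega
  have hne : P₁ ≠ 0 ∨ Q₁ ≠ 0 ∨ R₁ ≠ 0 ∨ S₁ ≠ 0 := by
    by_contra hc
    push_neg at hc
    exact h0 ⟨by rw [hc.1, mul_zero], by rw [hc.2.1, mul_zero], by rw [hc.2.2.1, mul_zero],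
      by rw [hc.2.2.2, mul_zero]⟩
  have hlt : P₁.natDegree + Q₁.natDegree + R₁.natDegree + S₁.natDegree < n := by
    obtain ⟨kP1, kP2⟩ := key P₁
    obtain ⟨kQ1, kQ2⟩ := key Q₁
    obtain ⟨kR1, kR2⟩ := key R₁
    obtain ⟨kS1, kS2⟩ := key S₁
    rcases hne with h | h | h | h
    · have := kP2 h; omega
    · have := kQ2 h; omega
    · have := kR2 h; omega
    · have := kS2 h; omega
  obtain ⟨e1, e2, e3, e4⟩ := ih _ hlt P₁ Q₁ R₁ S₁ rfl h5
  exact hne.elim (fun h => h e1) (fun h => h.elim (fun h => h e2)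
    (fun h => h.elim (fun h => h e3) (fun h => h e4)))

/-- Ring equivalence `ℂ[x,y] ≃ (ℂ[t])[s]` sending `X 0` to the outer variable and `X 1`
to the inner one. -/
private noncomputable def hptEquiv : MvPolynomial (Fin 2) ℂ ≃+* Polynomial (Polynomial ℂ) :=
  (MvPolynomial.finSuccEquiv ℂ 1).toRingEquiv.trans
    (Polynomial.mapEquiv ((MvPolynomial.renameEquiv ℂ (Equiv.equivPUnit.{1,1} (Fin 1))).trans
      (MvPolynomial.pUnitAlgEquiv ℂ)).toRingEquiv)

private lemma hptEquiv_X0 : hptEquiv (MvPolynomial.X 0) = Polynomial.X := by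
  rw [hptEquiv, RingEquiv.trans_apply]
  rw [show ((MvPolynomial.finSuccEquiv ℂ 1).toRingEquiv (MvPolynomial.X 0)) = Polynomial.X from
    MvPolynomial.finSuccEquiv_X_zero]
  simp

private lemma hptEquiv_X1 : hptEquiv (MvPolynomial.X 1) = Polynomial.C Polynomial.X := by
  rw [hptEquiv, RingEquiv.trans_apply]
  have h1 : (1 : Fin 2) = (0 : Fin 1).succ := rfl
  rw [show ((MvPolynomial.finSuccEquiv ℂ 1).toRingEquiv (MvPolynomial.X 1))
      = Polynomial.C (MvPolynomial.X 0) by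
    rw [h1]; exact MvPolynomial.finSuccEquiv_X_succ]
  simp

private lemma descentR (P Q R S : MvPolynomial (Fin 2) ℂ)
    (h : P ^ 2 = MvPolynomial.X 0 * Q ^ 2 + MvPolynomial.X 1 * R ^ 2
      - MvPolynomial.X 0 * MvPolynomial.X 1 * S ^ 2) :
    P = 0 ∧ Q = 0 ∧ R = 0 ∧ S = 0 := by
  have h' := congrArg hptEquiv h
  simp only [map_pow, map_mul, map_add, map_sub, hptEquiv_X0, hptEquiv_X1] at h'
  obtain ⟨hP, hQ, hR, hS⟩ :=
    descentA _ (hptEquiv P) (hptEquiv Q) (hptEquiv R) (hptEquiv S) rfl h'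
  exact ⟨hptEquiv.injective (by rw [hP, map_zero]),
    hptEquiv.injective (by rw [hQ, map_zero]),
    hptEquiv.injective (by rw [hR, map_zero]),
    hptEquiv.injective (by rw [hS, map_zero])⟩

private lemma anisoF (t a b c : FractionRing (MvPolynomial (Fin 2) ℂ))
    (h : t ^ 2 =
        algebraMap (MvPolynomial (Fin 2) ℂ) _ (MvPolynomial.X 0) * a ^ 2
      + algebraMap (MvPolynomial (Fin 2) ℂ) _ (MvPolynomial.X 1) * b ^ 2
      - algebraMap (MvPolynomial (Fin 2) ℂ) _ (MvPolynomial.X 0)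
        * algebraMap (MvPolynomial (Fin 2) ℂ) _ (MvPolynomial.X 1) * c ^ 2) :
    t = 0 ∧ a = 0 ∧ b = 0 ∧ c = 0 := by
  classical
  obtain ⟨d, hd⟩ := IsLocalization.exist_integer_multiples_of_finite
    (nonZeroDivisors (MvPolynomial (Fin 2) ℂ)) ![t, a, b, c]
  obtain ⟨P, hP⟩ := hd 0
  obtain ⟨Q, hQ⟩ := hd 1
  obtain ⟨R, hR⟩ := hd 2
  obtain ⟨S, hS⟩ := hd 3
  simp only [Matrix.cons_val_zero, Matrix.cons_val_one, Matrix.head_cons, Matrix.cons_val_two,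
    Matrix.cons_val_three, Matrix.tail_cons, Algebra.smul_def] at hP hQ hR hS
  have hE : algebraMap (MvPolynomial (Fin 2) ℂ) (FractionRing (MvPolynomial (Fin 2) ℂ)) (P ^ 2)
      = algebraMap (MvPolynomial (Fin 2) ℂ) (FractionRing (MvPolynomial (Fin 2) ℂ))
        (MvPolynomial.X 0 * Q ^ 2 + MvPolynomial.X 1 * R ^ 2
          - MvPolynomial.X 0 * MvPolynomial.X 1 * S ^ 2) := by
    simp only [map_pow, map_mul, map_add, map_sub]
    rw [hP, hQ, hR, hS]
    linear_combination (algebraMap (MvPolynomial (Fin 2) ℂ)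
      (FractionRing (MvPolynomial (Fin 2) ℂ)) ↑d) ^ 2 * h
  obtain ⟨hP0, hQ0, hR0, hS0⟩ := descentR _ _ _ _
    (IsFractionRing.injective (MvPolynomial (Fin 2) ℂ) (FractionRing (MvPolynomial (Fin 2) ℂ)) hE)
  have hd0 : algebraMap (MvPolynomial (Fin 2) ℂ) (FractionRing (MvPolynomial (Fin 2) ℂ))
      (↑d : MvPolynomial (Fin 2) ℂ) ≠ 0 := by
    intro hc
    exact nonZeroDivisors.coe_ne_zero d (IsFractionRing.injective (MvPolynomial (Fin 2) ℂ)
      (FractionRing (MvPolynomial (Fin 2) ℂ)) (by rw [hc, map_zero]))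
  refine ⟨?_, ?_, ?_, ?_⟩
  · have h0 : algebraMap (MvPolynomial (Fin 2) ℂ) _ (↑d : MvPolynomial (Fin 2) ℂ) * t = 0 := by
      rw [← hP, hP0, map_zero]
    exact (mul_eq_zero.mp h0).resolve_left hd0
  · have h0 : algebraMap (MvPolynomial (Fin 2) ℂ) _ (↑d : MvPolynomial (Fin 2) ℂ) * a = 0 := by
      rw [← hQ, hQ0, map_zero]
    exact (mul_eq_zero.mp h0).resolve_left hd0
  · have h0 : algebraMap (MvPolynomial (Fin 2) ℂ) _ (↑d : MvPolynomial (Fin 2) ℂ) * b = 0 := by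
      rw [← hR, hR0, map_zero]
    exact (mul_eq_zero.mp h0).resolve_left hd0
  · have h0 : algebraMap (MvPolynomial (Fin 2) ℂ) _ (↑d : MvPolynomial (Fin 2) ℂ) * c = 0 := by
      rw [← hS, hS0, map_zero]
    exact (mul_eq_zero.mp h0).resolve_left hd0

/-- In the rational function field `F = ℂ(x,y)` (the fraction field of the
polynomial ring `ℂ[x,y]`), the quaternion algebra `ℍ[F, x, y]` is a division ring: every
nonzero element is invertible.  In particular its Brauer class is nonzero. -/
theorem quaternionAlgebra_x_y_isDivisionRing
    (x y : FractionRing (MvPolynomial (Fin 2) ℂ))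
    (hx : x = algebraMap (MvPolynomial (Fin 2) ℂ) _ (MvPolynomial.X 0))
    (hy : y = algebraMap (MvPolynomial (Fin 2) ℂ) _ (MvPolynomial.X 1)) :
    ∀ q : ℍ[FractionRing (MvPolynomial (Fin 2) ℂ), x, y], q ≠ 0 → IsUnit q := by
  intro q hq
  set n : FractionRing (MvPolynomial (Fin 2) ℂ) :=
    q.re ^ 2 - x * q.imI ^ 2 - y * q.imJ ^ 2 + x * y * q.imK ^ 2 with hn
  have hn0 : n ≠ 0 := by
    intro h0
    apply hq
    have haniso := anisoF q.re q.imI q.imJ q.imK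
      (by rw [← hx, ← hy]; linear_combination hn.symm.trans h0)
    obtain ⟨h1, h2, h3, h4⟩ := haniso
    exact QuaternionAlgebra.ext (by simpa using h1) (by simpa using h2)
      (by simpa using h3) (by simpa using h4)
  have hinv : n * n⁻¹ = 1 := mul_inv_cancel₀ hn0
  rw [isUnit_iff_exists]
  refine ⟨⟨q.re * n⁻¹, -(q.imI * n⁻¹), -(q.imJ * n⁻¹), -(q.imK * n⁻¹)⟩, ?_, ?_⟩ <;>
  · apply QuaternionAlgebra.ext <;>
    simp only [QuaternionAlgebra.re_mul, QuaternionAlgebra.imI_mul, QuaternionAlgebra.imJ_mul,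
      QuaternionAlgebra.imK_mul, QuaternionAlgebra.re_one, QuaternionAlgebra.imI_one,
      QuaternionAlgebra.imJ_one, QuaternionAlgebra.imK_one]
    · linear_combination (-n⁻¹) * hn + hinv
    · ring
    · ring
    · ring
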